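/- For f, g ∈ L¹(ℝ), the A-convolution satisfies ‖g ⋆_A f‖₁ ≤ (2π|b|)^{-1/2} ‖g‖₁ ‖f‖₁, so (L¹(ℝ), ⋆_A) is a commutative Banach algebra. -/

import Mathlib

open MeasureTheory

/-- The `A`-translation `T^A_x f(t) = e^{-i(a/b)x(t-x)} f(t-x)`. -/
noncomputable def Atrans (a b x : ℝ) (f : ℝ → ℂ) (t : ℝ) : ℂ :=
  Complex.exp (-Complex.I * ((a : ℂ) / b) * x * ((t : ℝ) - x)) * f (t - x)

/-- The `A`-convolution of two functions. -/
noncomputable def convA (a b : ℝ) (g f : ℝ → ℂ) (t : ℝ) : ℂ :=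
  (Real.sqrt (2 * Real.pi * |b|) : ℂ)⁻¹ * ∫ s : ℝ, g s * Atrans a b s f t

lemma norm_Atrans (a b x : ℝ) (f : ℝ → ℂ) (t : ℝ) :
    ‖Atrans a b x f t‖ = ‖f (t - x)‖ := by
  unfold Atrans
  rw [norm_mul]
  have h : -Complex.I * ((a : ℂ) / b) * x * ((t : ℂ) - x)
      = ((-(a / b) * x * (t - x) : ℝ) : ℂ) * Complex.I := by push_cast; ring
  rw [h, Complex.norm_exp_ofReal_mul_I, one_mul]

/-- `‖g ⋆_A f‖₁ ≤ (2π|b|)^{-1/2} ‖g‖₁ ‖f‖₁`. -/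
theorem convA_norm_le (a b : ℝ) (hb : b ≠ 0) (g f : ℝ → ℂ)
    (hg : Integrable g) (hf : Integrable f) :
    Integrable (convA a b g f) ∧
      (∫ t : ℝ, ‖convA a b g f t‖) ≤
        (Real.sqrt (2 * Real.pi * |b|))⁻¹ * (∫ s : ℝ, ‖g s‖) * ∫ t : ℝ, ‖f t‖ := by
  set c : ℝ := (Real.sqrt (2 * Real.pi * |b|))⁻¹ with hc
  have hc0 : 0 ≤ c := inv_nonneg.2 (Real.sqrt_nonneg _)
  set F : ℝ × ℝ → ℂ := fun p => g p.1 * Atrans a b p.1 f p.2 with hFdef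
  have hnormF : ∀ p : ℝ × ℝ, ‖F p‖ = ‖g p.1‖ * ‖f (p.2 - p.1)‖ := by
    intro p; rw [hFdef]; simp only [norm_mul, norm_Atrans]
  -- integrability of the norm bound on the product space
  have hG1 : Integrable (fun p : ℝ × ℝ => ‖g p.2‖ * ‖f (p.1 - p.2)‖)
      ((volume : Measure ℝ).prod volume) := by
    have := hg.norm.convolution_integrand (ContinuousLinearMap.mul ℝ ℝ) hf.norm
    simpa using this
  have hG0 : Integrable (fun p : ℝ × ℝ => ‖g p.1‖ * ‖f (p.2 - p.1)‖)
      ((volume : Measure ℝ).prod volume) := hG1.swap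
  -- measurability of F
  have hqmp : Measure.QuasiMeasurePreserving (fun p : ℝ × ℝ => p.2 - p.1)
      ((volume : Measure ℝ).prod volume) (volume : Measure ℝ) := by
    have h1 := quasiMeasurePreserving_sub_of_right_invariant
      (μ := (volume : Measure ℝ)) (ν := (volume : Measure ℝ))
    have h2 : MeasurePreserving (Prod.swap : ℝ × ℝ → ℝ × ℝ)
        ((volume : Measure ℝ).prod volume) ((volume : Measure ℝ).prod volume) :=
      Measure.measurePreserving_swap
    exact h1.comp h2.quasiMeasurePreserving
  have hFm : AEStronglyMeasurable F ((volume : Measure ℝ).prod volume) := by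
    apply AEStronglyMeasurable.mul
    · exact hg.aestronglyMeasurable.comp_fst
    · apply AEStronglyMeasurable.mul
      · apply Continuous.aestronglyMeasurable
        continuity
      · exact hf.aestronglyMeasurable.comp_quasiMeasurePreserving hqmp
  have hF : Integrable F ((volume : Measure ℝ).prod volume) := by
    refine hG0.mono' hFm (Filter.Eventually.of_forall fun p => ?_)
    rw [hnormF p]
  have hI : Integrable (fun t : ℝ => ∫ s : ℝ, F (s, t)) := hF.swap.integral_prod_left
  have hconv : convA a b g f = fun t => (c : ℂ) * ∫ s : ℝ, F (s, t) := by
    funext t; unfold convA; rw [hc]; norm_cast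
  constructor
  · rw [hconv]; exact hI.const_mul _
  · rw [hconv]
    have hnc : ‖(c : ℂ)‖ = c := by
      rw [Complex.norm_real]; exact Real.norm_of_nonneg hc0
    calc (∫ t : ℝ, ‖(c : ℂ) * ∫ s : ℝ, F (s, t)‖)
        = ∫ t : ℝ, c * ‖∫ s : ℝ, F (s, t)‖ := by
          simp_rw [norm_mul, hnc]
      _ = c * ∫ t : ℝ, ‖∫ s : ℝ, F (s, t)‖ := integral_const_mul c _
      _ ≤ c * ∫ t : ℝ, ∫ s : ℝ, ‖F (s, t)‖ := by
          refine mul_le_mul_of_nonneg_left ?_ hc0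
          refine integral_mono hI.norm hF.swap.norm.integral_prod_left ?_
          intro t
          exact norm_integral_le_integral_norm _
      _ = c * ∫ t : ℝ, ∫ s : ℝ, ‖g s‖ * ‖f (t - s)‖ := by
          congr 1; simp_rw [hnormF]
      _ = c * ∫ s : ℝ, ∫ t : ℝ, ‖g s‖ * ‖f (t - s)‖ := by
          congr 1
          exact integral_integral_swap (by exact hG1)
      _ = c * ∫ s : ℝ, ‖g s‖ * ∫ t : ℝ, ‖f t‖ := by
          congr 1
          refine integral_congr_ae (Filter.Eventually.of_forall fun s => ?_)
          show (∫ t : ℝ, ‖g s‖ * ‖f (t - s)‖) = ‖g s‖ * ∫ t : ℝ, ‖f t‖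
          rw [integral_const_mul, integral_sub_right_eq_self (fun t => ‖f t‖) s]
      _ = c * (∫ s : ℝ, ‖g s‖) * ∫ t : ℝ, ‖f t‖ := by
          rw [integral_mul_const]; ring
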